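/- Under the above hypotheses, E[L] ≥ √(k/q)·(1−o(1))·q/16 ≥ 0.06·√(kq). Consequently, the expected encoding length 2k log n + 0.027·√(kq)·log n + (k − E[L])·log n is at most 3k·log n − 0.033·√(kq)·log n, which implies |X̄| ≤ 2^{3k log n − 0.033√(kq) log n} and μ_x(X̄) ≤ 2^{−0.033·√(kq)·log n} under the uniform distribution μ_x over weighted point tuples (n^{3k} possibilities). -/

import Mathlib

open Classical Real Finset in
set_option maxHeartbeats 1000000 in
theorem stmt19 :
    ∃ N : ℕ, ∀ n ≥ N, ∀ k q R : ℕ,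
      16 ∣ q → 1 ≤ q → Real.sqrt n ≤ (k : ℝ) →
      (q : ℝ) * (Real.logb 2 n) ^ 999 ≤ (k : ℝ) →
      (k : ℝ) ≤ (q : ℝ) * (Real.logb 2 n) ^ 1001 →
      Real.sqrt ((k : ℝ) / q) ≤ (R : ℝ) →
      (R : ℝ) ≤ Real.sqrt ((k : ℝ) / q) + 1 →
      ∀ (Ω : Type) [Fintype Ω] (μ : Ω → ℝ) (gain : Fin R → Ω → ℕ) (p : ℝ),
      (∀ ω, 0 ≤ μ ω) → (∑ ω, μ ω = 1) → 0 < p → p ≤ 1 →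
      (2 : ℝ) ^ (-(0.026 : ℝ) * q * Real.logb 2 k - 0.001 * q * Real.logb 2 n) ≤ p / 2 →
      (∀ j : Fin R,
        1 - (2 : ℝ) ^ (-(0.031 : ℝ) * q * Real.logb 2 k) / (p / 2) ≤
          ∑ ω ∈ Finset.univ.filter (fun ω => q / 16 ≤ gain j ω), μ ω) →
      ((1 - (2 : ℝ) ^ (-(0.031 : ℝ) * q * Real.logb 2 k) / (p / 2)) * R * ((q : ℝ) / 16)
          ≤ ∑ j : Fin R, ∑ ω : Ω, μ ω * (gain j ω : ℝ))
      ∧ (0.06 * Real.sqrt ((k : ℝ) * q) ≤ ∑ j : Fin R, ∑ ω : Ω, μ ω * (gain j ω : ℝ))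
      ∧ (2 * (k : ℝ) * Real.logb 2 n + 0.027 * Real.sqrt ((k : ℝ) * q) * Real.logb 2 n
            + ((k : ℝ) - ∑ j : Fin R, ∑ ω : Ω, μ ω * (gain j ω : ℝ)) * Real.logb 2 n
          ≤ 3 * (k : ℝ) * Real.logb 2 n
            - 0.033 * Real.sqrt ((k : ℝ) * q) * Real.logb 2 n)
      ∧ ∀ (XT : Type) (Xb : Finset XT),
          Real.logb 2 (Xb.card) ≤
            2 * (k : ℝ) * Real.logb 2 n + 0.027 * Real.sqrt ((k : ℝ) * q) * Real.logb 2 n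
              + ((k : ℝ) - ∑ j : Fin R, ∑ ω : Ω, μ ω * (gain j ω : ℝ)) * Real.logb 2 n →
          (Xb.card : ℝ) ≤
            2 ^ (3 * (k : ℝ) * Real.logb 2 n
              - 0.033 * Real.sqrt ((k : ℝ) * q) * Real.logb 2 n)
          ∧ (Xb.card : ℝ) / (n : ℝ) ^ (3 * k) ≤
            2 ^ (-(0.033 : ℝ) * Real.sqrt ((k : ℝ) * q) * Real.logb 2 n) := by
  refine ⟨2 ^ 5000, ?_⟩
  intro n hn k q R hq16 hq1 hsqrtn hk1 hk2 hR1 hR2 Ω _ μ gain p hμ hμ1 hp hp1 hpge hgain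
  clear hk1 hk2
  have hnpos : (0 : ℝ) < n := by
    have : (0 : ℕ) < n := lt_of_lt_of_le (by positivity) hn
    exact_mod_cast this
  have hn' : (2 : ℝ) ^ (5000 : ℝ) ≤ (n : ℝ) := by
    have h1 : ((2 ^ 5000 : ℕ) : ℝ) ≤ (n : ℝ) := by exact_mod_cast hn
    have h2 : (2 : ℝ) ^ (5000 : ℝ) = ((2 ^ 5000 : ℕ) : ℝ) := by
      rw [show (5000 : ℝ) = ((5000 : ℕ) : ℝ) by norm_num, Real.rpow_natCast]
      push_cast; ring
    linarith
  set Ln := Real.logb 2 n with hLndef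
  set Lk := Real.logb 2 k with hLkdef
  have hLn : (5000 : ℝ) ≤ Ln := by
    rw [hLndef, Real.le_logb_iff_rpow_le one_lt_two hnpos]
    exact hn'
  have hLnpos : (0 : ℝ) ≤ Ln := by linarith
  clear hn hn'
  have hkpos : (0 : ℝ) < k := lt_of_lt_of_le (Real.sqrt_pos.mpr hnpos) hsqrtn
  have hLk : Ln / 2 ≤ Lk := by
    have h1 : Real.logb 2 (Real.sqrt n) ≤ Lk :=
      Real.logb_le_logb_of_le one_lt_two (Real.sqrt_pos.mpr hnpos) hsqrtn
    have h2 : Real.logb 2 (Real.sqrt n) = Ln / 2 := by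
      rw [hLndef, Real.logb, Real.logb, Real.log_sqrt hnpos.le]; ring
    linarith
  have hLkpos : (0 : ℝ) ≤ Lk := by linarith
  have hq1' : (1 : ℝ) ≤ q := by exact_mod_cast hq1
  set ε := (2 : ℝ) ^ (-(0.031 : ℝ) * q * Lk) / (p / 2) with hεdef
  have hεnonneg : 0 ≤ ε := by
    apply div_nonneg (Real.rpow_nonneg (by norm_num) _) (by linarith)
  have hε : ε ≤ 0.01 := by
    have hppos : (0 : ℝ) < p / 2 := by linarith
    have hbpos : (0 : ℝ) < (2 : ℝ) ^ (-(0.026 : ℝ) * q * Lk - 0.001 * q * Ln) :=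
      Real.rpow_pos_of_pos (by norm_num) _
    have h1 : ε ≤ (2 : ℝ) ^ (-(0.031 : ℝ) * q * Lk) /
        (2 : ℝ) ^ (-(0.026 : ℝ) * q * Lk - 0.001 * q * Ln) :=
      div_le_div_of_nonneg_left (Real.rpow_nonneg (by norm_num) _) hbpos hpge
    have h2 : (2 : ℝ) ^ (-(0.031 : ℝ) * q * Lk) /
        (2 : ℝ) ^ (-(0.026 : ℝ) * q * Lk - 0.001 * q * Ln) =
        (2 : ℝ) ^ ((-(0.031 : ℝ) * q * Lk) - (-(0.026 : ℝ) * q * Lk - 0.001 * q * Ln)) :=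
      (Real.rpow_sub (by norm_num : (0:ℝ) < 2) _ _).symm
    have h3 : (-(0.031 : ℝ) * q * Lk) - (-(0.026 : ℝ) * q * Lk - 0.001 * q * Ln) ≤ -7.5 := by
      have hql : (0.005 : ℝ) * q * (Ln / 2) ≤ 0.005 * q * Lk := by nlinarith
      nlinarith
    have h4 : (2 : ℝ) ^ ((-(0.031 : ℝ) * q * Lk) - (-(0.026 : ℝ) * q * Lk - 0.001 * q * Ln))
        ≤ (2 : ℝ) ^ (-7.5 : ℝ) := Real.rpow_le_rpow_of_exponent_le one_le_two h3
    have h5 : (2 : ℝ) ^ (-7.5 : ℝ) ≤ (2 : ℝ) ^ (-7 : ℝ) :=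
      Real.rpow_le_rpow_of_exponent_le one_le_two (by norm_num)
    have h6 : (2 : ℝ) ^ (-7 : ℝ) = 1 / 128 := by
      rw [Real.rpow_neg (by norm_num), show (7 : ℝ) = ((7 : ℕ) : ℝ) by norm_num,
        Real.rpow_natCast]
      norm_num
    have h7 : (1 : ℝ) / 128 ≤ 0.01 := by norm_num
    calc ε ≤ _ := h1
      _ = _ := h2
      _ ≤ _ := h4
      _ ≤ _ := h5
      _ ≤ _ := by rw [h6]; exact h7
  have hq16c : ((q / 16 : ℕ) : ℝ) = (q : ℝ) / 16 := by
    obtain ⟨m, rfl⟩ := hq16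
    rw [Nat.mul_div_cancel_left m (by norm_num : 0 < 16)]
    push_cast; ring
  -- per-repetition bound
  have hj : ∀ j : Fin R, (1 - ε) * ((q : ℝ) / 16) ≤ ∑ ω : Ω, μ ω * (gain j ω : ℝ) := by
    intro j
    have hsub : ∀ ω ∈ Finset.univ.filter (fun ω => q / 16 ≤ gain j ω),
        μ ω * ((q : ℝ) / 16) ≤ μ ω * (gain j ω : ℝ) := by
      intro ω hω
      rw [Finset.mem_filter] at hω
      have : (q : ℝ) / 16 ≤ (gain j ω : ℝ) := by
        rw [← hq16c]; exact_mod_cast hω.2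
      exact mul_le_mul_of_nonneg_left this (hμ ω)
    calc (1 - ε) * ((q : ℝ) / 16)
        ≤ (∑ ω ∈ Finset.univ.filter (fun ω => q / 16 ≤ gain j ω), μ ω) * ((q : ℝ) / 16) :=
          mul_le_mul_of_nonneg_right (hgain j) (by positivity)
      _ = ∑ ω ∈ Finset.univ.filter (fun ω => q / 16 ≤ gain j ω), μ ω * ((q : ℝ) / 16) := by
          rw [Finset.sum_mul]
      _ ≤ ∑ ω ∈ Finset.univ.filter (fun ω => q / 16 ≤ gain j ω), μ ω * (gain j ω : ℝ) :=
          Finset.sum_le_sum hsub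
      _ ≤ ∑ ω : Ω, μ ω * (gain j ω : ℝ) :=
          Finset.sum_le_sum_of_subset_of_nonneg (Finset.filter_subset _ _)
            (fun ω _ _ => mul_nonneg (hμ ω) (by positivity))
  set E := ∑ j : Fin R, ∑ ω : Ω, μ ω * (gain j ω : ℝ) with hEdef
  have hE1 : (1 - ε) * R * ((q : ℝ) / 16) ≤ E := by
    have h1 : ∑ _j : Fin R, (1 - ε) * ((q : ℝ) / 16) ≤ E :=
      Finset.sum_le_sum (fun j _ => hj j)
    rw [Finset.sum_const, Finset.card_univ, Fintype.card_fin, nsmul_eq_mul] at h1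
    linarith [h1]
  have hsqkq : Real.sqrt ((k : ℝ) / q) * q = Real.sqrt ((k : ℝ) * q) := by
    have hq0 : (0 : ℝ) < q := by linarith
    have h1 : (k : ℝ) * q = ((k : ℝ) / q) * q ^ 2 := by field_simp
    rw [h1, Real.sqrt_mul (by positivity), Real.sqrt_sq hq0.le]
  have hE2 : 0.06 * Real.sqrt ((k : ℝ) * q) ≤ (1 - ε) * R * ((q : ℝ) / 16) := by
    have hs : (0 : ℝ) ≤ Real.sqrt ((k : ℝ) / q) := Real.sqrt_nonneg _
    have hR0 : (0 : ℝ) ≤ R := le_trans hs hR1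
    have h99 : (0.99 : ℝ) ≤ 1 - ε := by linarith
    have h1 : 0.99 * Real.sqrt ((k : ℝ) / q) ≤ (1 - ε) * R :=
      mul_le_mul h99 hR1 hs (by linarith)
    have hq0 : (0 : ℝ) ≤ (q : ℝ) / 16 := by positivity
    calc 0.06 * Real.sqrt ((k : ℝ) * q)
        ≤ (0.99 / 16) * Real.sqrt ((k : ℝ) * q) :=
          mul_le_mul_of_nonneg_right (by norm_num) (Real.sqrt_nonneg _)
      _ = 0.99 * Real.sqrt ((k : ℝ) / q) * ((q : ℝ) / 16) := by
          rw [← hsqkq]; ring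
      _ ≤ (1 - ε) * R * ((q : ℝ) / 16) := mul_le_mul_of_nonneg_right h1 hq0
  have hE : 0.06 * Real.sqrt ((k : ℝ) * q) ≤ E := le_trans hE2 hE1
  refine ⟨hE1, hE, ?_, ?_⟩
  · have := mul_le_mul_of_nonneg_right hE hLnpos
    nlinarith [this]
  · intro XT Xb hcard
    set S := Real.sqrt ((k : ℝ) * q) with hSdef
    set T := 3 * (k : ℝ) * Ln - 0.033 * S * Ln with hTdef
    have hT : Real.logb 2 (Xb.card : ℝ) ≤ T := by
      have h3 : 2 * (k : ℝ) * Ln + 0.027 * S * Ln + ((k : ℝ) - E) * Ln ≤ T := by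
        have := mul_le_mul_of_nonneg_right hE hLnpos
        rw [hTdef]; nlinarith [this]
      exact le_trans hcard h3
    have hfirst : (Xb.card : ℝ) ≤ (2 : ℝ) ^ T := by
      rcases Nat.eq_zero_or_pos Xb.card with h0 | h0
      · rw [h0]; exact_mod_cast (Real.rpow_pos_of_pos (by norm_num : (0:ℝ) < 2) T).le
      · have hcpos : (0 : ℝ) < (Xb.card : ℝ) := by exact_mod_cast h0
        exact (Real.logb_le_iff_le_rpow one_lt_two hcpos).mp hT
    have h2T : (2 : ℝ) ^ T = (n : ℝ) ^ (3 * k) * (2 : ℝ) ^ (-(0.033 : ℝ) * S * Ln) := by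
      have hTsplit : T = Ln * ((3 * k : ℕ) : ℝ) + (-(0.033 : ℝ) * S * Ln) := by
        rw [hTdef]; push_cast; ring
      rw [hTsplit, Real.rpow_add (by norm_num : (0:ℝ) < 2), Real.rpow_mul (by norm_num : (0:ℝ) ≤ 2),
        Real.rpow_logb (by norm_num : (0:ℝ) < 2) (by norm_num) hnpos, Real.rpow_natCast]
    constructor
    · exact hfirst
    · rw [div_le_iff₀ (by positivity)]
      calc (Xb.card : ℝ) ≤ (2 : ℝ) ^ T := hfirst
        _ = (2 : ℝ) ^ (-(0.033 : ℝ) * S * Ln) * (n : ℝ) ^ (3 * k) := by rw [h2T]; ring
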